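/- Truncation error of the AA θ-ICN method over two time steps: let a ∈ ℝ, a ≠ 0, R > 0, θ_o, θ_e ∈ ℝ, x ∈ ℝ, and let f : ℝ → ℝ be three times continuously differentiable. For Δt > 0 set Δx = aΔt/(2R) and u_Δt(j) = f(x + jΔx). Then (S_{θ_e,R}(S_{θ_o,R}(u_Δt))(0) − f(x − 2aΔt))/Δt² tends to (θ_o + θ_e − 1)·a²·f''(x) as Δt → 0⁺. In particular, if θ_o + θ_e = 1 the limit is 0, i.e. the AA θ-ICN method is second order accurate. -/

import Mathlib

open Filter Topology

/-- The two-iteration θ-ICN step with mesh ratio `R` and weight `θ`. -/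
noncomputable def icnStep (θ R : ℝ) (u : ℤ → ℝ) : ℤ → ℝ := fun j =>
  let ut1 : ℤ → ℝ := fun j => u j - R * (u (j + 1) - u (j - 1))
  let w1 : ℤ → ℝ := fun j => θ * ut1 j + (1 - θ) * u j
  let ut2 : ℤ → ℝ := fun j => u j - R * (w1 (j + 1) - w1 (j - 1))
  let w2 : ℤ → ℝ := fun j => θ * ut2 j + (1 - θ) * u j
  u j - R * (w2 (j + 1) - w2 (j - 1))

/-- Coefficients of the two-step AA θ-ICN stencil (plus the exact-solution term). -/
noncomputable def icnLam (θo θe R : ℝ) : Fin 14 → ℝ :=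
  ![θo^2*θe^2*R^6,
    (θo*θe^2+θo^2*θe)*R^5,
    (θe^2+θo*θe+θo^2)*R^4 - 6*θo^2*θe^2*R^6,
    (θe+θe^2+θo+θo^2)*R^3 - 5*(θo*θe^2+θo^2*θe)*R^5,
    (1+θe+θo)*R^2 - 4*(θe^2+θo*θe+θo^2)*R^4 + 15*θo^2*θe^2*R^6,
    2*R - 3*(θe+θe^2+θo+θo^2)*R^3 + 10*(θo*θe^2+θo^2*θe)*R^5,
    1 - 2*(1+θe+θo)*R^2 + 6*(θe^2+θo*θe+θo^2)*R^4 - 20*θo^2*θe^2*R^6,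
    -(2*R) + 3*(θe+θe^2+θo+θo^2)*R^3 - 10*(θo*θe^2+θo^2*θe)*R^5,
    (1+θe+θo)*R^2 - 4*(θe^2+θo*θe+θo^2)*R^4 + 15*θo^2*θe^2*R^6,
    -((θe+θe^2+θo+θo^2)*R^3) + 5*(θo*θe^2+θo^2*θe)*R^5,
    (θe^2+θo*θe+θo^2)*R^4 - 6*θo^2*θe^2*R^6,
    -((θo*θe^2+θo^2*θe)*R^5),
    θo^2*θe^2*R^6,
    -1]

/-- Displacement rates of the two-step AA θ-ICN stencil (plus the exact-solution term). -/
noncomputable def icnC (a R : ℝ) : Fin 14 → ℝ :=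
  ![-6*(a/(2*R)), -5*(a/(2*R)), -4*(a/(2*R)), -3*(a/(2*R)),
    -2*(a/(2*R)), -1*(a/(2*R)), 0, 1*(a/(2*R)), 2*(a/(2*R)), 3*(a/(2*R)),
    4*(a/(2*R)), 5*(a/(2*R)), 6*(a/(2*R)), -(2*a)]

/-- Second-order expansion of a linear combination of shifted samples of a `C²` function. -/
lemma icn_key {ι : Type*} (s : Finset ι) (lam c : ι → ℝ) (f : ℝ → ℝ) (hf : ContDiff ℝ 2 f)
    (x : ℝ) (h0 : ∑ i ∈ s, lam i = 0) (h1 : ∑ i ∈ s, lam i * c i = 0) :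
    Tendsto (fun ε : ℝ => (∑ i ∈ s, lam i * f (x + c i * ε)) / ε ^ 2) (𝓝[>] 0)
      (𝓝 ((∑ i ∈ s, lam i * c i ^ 2) * deriv (deriv f) x / 2)) := by
  have h2 : (2 : WithTop ℕ∞) = 1 + 1 := by norm_num
  rw [h2] at hf
  have hf' : ContDiff ℝ 1 (deriv f) := (contDiff_succ_iff_deriv.mp hf).2.2
  have hd1 : Differentiable ℝ f := (contDiff_succ_iff_deriv.mp hf).1
  have hd2 : Differentiable ℝ (deriv f) := (contDiff_one_iff_deriv.mp hf').1
  have hcont2 : Continuous (deriv (deriv f)) := (contDiff_one_iff_deriv.mp hf').2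
  set F : ℝ → ℝ := fun ε => ∑ i ∈ s, lam i * f (x + c i * ε) with hF
  set G : ℝ → ℝ := fun ε => ∑ i ∈ s, lam i * (deriv f (x + c i * ε) * c i) with hG
  set H : ℝ → ℝ := fun ε => ∑ i ∈ s, lam i * (deriv (deriv f) (x + c i * ε) * c i * c i) with hH
  have haffc : ∀ i : ι, Continuous (fun ε : ℝ => x + c i * ε) := by
    intro i; continuity
  have haff : ∀ (i : ι) (ε : ℝ), HasDerivAt (fun ε : ℝ => x + c i * ε) (c i) ε := by
    intro i ε
    simpa using ((hasDerivAt_id ε).const_mul (c i)).const_add x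
  have hFd : ∀ ε : ℝ, HasDerivAt F (G ε) ε := by
    intro ε
    apply HasDerivAt.fun_sum
    intro i _
    exact (((hd1 (x + c i * ε)).hasDerivAt.comp ε (haff i ε))).const_mul (lam i)
  have hGd : ∀ ε : ℝ, HasDerivAt G (H ε) ε := by
    intro ε
    apply HasDerivAt.fun_sum
    intro i _
    have := ((((hd2 (x + c i * ε)).hasDerivAt.comp ε (haff i ε))).mul_const (c i)).const_mul (lam i)
    exact this.congr_deriv (by ring)
  have hFc : Tendsto F (𝓝[>] 0) (𝓝 0) := by
    have hc : Continuous F :=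
      continuous_finset_sum _ fun i _ => continuous_const.mul (hd1.continuous.comp (haffc i))
    have hz : F 0 = 0 := by
      simp only [hF, mul_zero, add_zero, ← Finset.sum_mul]
      rw [h0, zero_mul]
    have := (hc.tendsto 0).mono_left (nhdsWithin_le_nhds (s := Set.Ioi (0:ℝ)))
    rwa [hz] at this
  have hGc : Tendsto G (𝓝[>] 0) (𝓝 0) := by
    have hc : Continuous G :=
      continuous_finset_sum _ fun i _ =>
        continuous_const.mul ((hd2.continuous.comp (haffc i)).mul continuous_const)
    have hz : G 0 = 0 := by
      have : ∀ i ∈ s, lam i * (deriv f (x + c i * 0) * c i) = deriv f x * (lam i * c i) := by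
        intro i _; rw [mul_zero, add_zero]; ring
      simp only [hG, Finset.sum_congr rfl this, ← Finset.mul_sum]
      rw [h1, mul_zero]
    have := (hc.tendsto 0).mono_left (nhdsWithin_le_nhds (s := Set.Ioi (0:ℝ)))
    rwa [hz] at this
  set L : ℝ := (∑ i ∈ s, lam i * c i ^ 2) * deriv (deriv f) x / 2 with hL
  have hHc : Tendsto H (𝓝[>] 0) (𝓝 (2 * L)) := by
    have hc : Continuous H :=
      continuous_finset_sum _ fun i _ =>
        continuous_const.mul (((hcont2.comp (haffc i)).mul continuous_const).mul continuous_const)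
    have hz : H 0 = 2 * L := by
      have : ∀ i ∈ s, lam i * (deriv (deriv f) (x + c i * 0) * c i * c i)
          = deriv (deriv f) x * (lam i * c i ^ 2) := by
        intro i _; rw [mul_zero, add_zero]; ring
      simp only [hH, Finset.sum_congr rfl this, ← Finset.mul_sum]
      rw [hL]; ring
    have := (hc.tendsto 0).mono_left (nhdsWithin_le_nhds (s := Set.Ioi (0:ℝ)))
    rwa [hz] at this
  have hlin : ∀ ε : ℝ, HasDerivAt (fun ε : ℝ => 2 * ε) 2 ε := by
    intro ε; simpa using (hasDerivAt_id ε).const_mul 2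
  have step1 : Tendsto (fun ε => G ε / (2 * ε)) (𝓝[>] 0) (𝓝 L) := by
    apply HasDerivAt.lhopital_zero_right_on_Ioo (b := 1) zero_lt_one
      (fun ε _ => hGd ε) (fun ε _ => hlin ε) (fun ε _ => two_ne_zero)
      hGc
      (by
        have : Tendsto (fun ε : ℝ => 2 * ε) (𝓝 0) (𝓝 (2 * 0)) :=
          (continuous_const.mul continuous_id).tendsto 0
        simpa using this.mono_left (nhdsWithin_le_nhds (s := Set.Ioi (0:ℝ))))
      (by
        have := hHc.div_const 2
        have h2L : 2 * L / 2 = L := by ring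
        rwa [h2L] at this)
  have hsq : ∀ ε : ℝ, HasDerivAt (fun ε : ℝ => ε ^ 2) (2 * ε) ε := by
    intro ε
    simpa [mul_comm] using hasDerivAt_pow 2 ε
  have step2 : Tendsto (fun ε => F ε / ε ^ 2) (𝓝[>] 0) (𝓝 L) := by
    apply HasDerivAt.lhopital_zero_right_on_Ioo (b := 1) zero_lt_one
      (fun ε _ => hFd ε) (fun ε _ => hsq ε)
      (fun ε hε => by have h := hε.1; positivity)
      hFc
      (by
        have : Tendsto (fun ε : ℝ => ε ^ 2) (𝓝 0) (𝓝 ((0:ℝ) ^ 2)) := (continuous_pow 2).tendsto 0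
        simpa using this.mono_left (nhdsWithin_le_nhds (s := Set.Ioi (0:ℝ))))
      step1
  exact step2

set_option maxHeartbeats 2000000

theorem aaICN_truncation_error (a R θo θe x : ℝ) (ha : a ≠ 0) (hR : 0 < R)
    (f : ℝ → ℝ) (hf : ContDiff ℝ 3 f) :
    Tendsto
      (fun Δt : ℝ =>
        (icnStep θe R (icnStep θo R (fun j : ℤ => f (x + (j : ℝ) * (a * Δt / (2 * R))))) 0
            - f (x - 2 * a * Δt)) / Δt ^ 2)
      (𝓝[>] 0) (𝓝 ((θo + θe - 1) * a ^ 2 * deriv (deriv f) x)) ∧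
    (θo + θe = 1 →
      Tendsto
        (fun Δt : ℝ =>
          (icnStep θe R (icnStep θo R (fun j : ℤ => f (x + (j : ℝ) * (a * Δt / (2 * R))))) 0
              - f (x - 2 * a * Δt)) / Δt ^ 2)
        (𝓝[>] 0) (𝓝 0)) := by
  have hR0 : R ≠ 0 := ne_of_gt hR
  have h0 : ∑ i : Fin 14, icnLam θo θe R i = 0 := by
    simp [icnLam, Fin.sum_univ_succ]
    ring
  have h1 : ∑ i : Fin 14, icnLam θo θe R i * icnC a R i = 0 := by
    simp [icnLam, icnC, Fin.sum_univ_succ]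
    field_simp
    ring
  have h2sum : ∑ i : Fin 14, icnLam θo θe R i * icnC a R i ^ 2
      = 2 * ((θo + θe - 1) * a ^ 2) := by
    simp [icnLam, icnC, Fin.sum_univ_succ]
    field_simp
    ring
  have hnum : ∀ Δt : ℝ,
      icnStep θe R (icnStep θo R (fun j : ℤ => f (x + (j : ℝ) * (a * Δt / (2 * R))))) 0
          - f (x - 2 * a * Δt)
        = ∑ i : Fin 14, icnLam θo θe R i * f (x + icnC a R i * Δt) := by
    intro Δt
    simp only [icnLam, icnC, Fin.sum_univ_succ, Fin.sum_univ_zero, Matrix.cons_val_zero,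
      Matrix.cons_val_succ]
    simp only [icnStep]
    norm_num
    ring_nf
  have K := icn_key Finset.univ (icnLam θo θe R) (icnC a R) f
    (hf.of_le (by norm_num)) x h0 h1
  rw [h2sum] at K
  have hv : 2 * ((θo + θe - 1) * a ^ 2) * deriv (deriv f) x / 2
      = (θo + θe - 1) * a ^ 2 * deriv (deriv f) x := by ring
  rw [hv] at K
  have hEq : (fun Δt : ℝ =>
        (icnStep θe R (icnStep θo R (fun j : ℤ => f (x + (j : ℝ) * (a * Δt / (2 * R))))) 0
            - f (x - 2 * a * Δt)) / Δt ^ 2)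
      = (fun ε : ℝ => (∑ i ∈ Finset.univ, icnLam θo θe R i * f (x + icnC a R i * ε)) / ε ^ 2) := by
    funext Δt
    rw [hnum Δt]
  have main : Tendsto
      (fun Δt : ℝ =>
        (icnStep θe R (icnStep θo R (fun j : ℤ => f (x + (j : ℝ) * (a * Δt / (2 * R))))) 0
            - f (x - 2 * a * Δt)) / Δt ^ 2)
      (𝓝[>] 0) (𝓝 ((θo + θe - 1) * a ^ 2 * deriv (deriv f) x)) := by
    rw [hEq]; exact K
  refine ⟨main, fun hθ => ?_⟩
  have hz : (θo + θe - 1) * a ^ 2 * deriv (deriv f) x = 0 := by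
    rw [hθ]; ring
  rwa [hz] at main
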